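/- Let H : [t₀,ϑ₀]×ℝⁿ×ℝⁿ → ℝ satisfy conditions H1–H3 with constant Υ > 0. Define f : [t₀,ϑ₀]×ℝⁿ×(B×B)×(B×B) → ℝⁿ by f(t,x,(y,y'),(z,z')) = (H(t,x,z)+Υ(1+‖x‖))·z' + Υ(1+‖x‖)·y + Υ(1+‖x‖)(1+⟨y,z⟩)·y'. Then for every (t,x,s) ∈ [t₀,ϑ₀]×ℝⁿ×ℝⁿ one has H(t,x,s) = max_{(z,z')∈B×B} min_{(y,y')∈B×B} ⟨s, f(t,x,(y,y'),(z,z'))⟩, the maximum and minimum being attained. -/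

import Mathlib

open Set Filter Metric
open scoped RealInnerProductSpace

noncomputable section

abbrev Eu (n : ℕ) := EuclideanSpace ℝ (Fin n)

/-- ω belongs to the class Ω: even, nonnegative, subadditive, and ω(δ) → 0 as δ → 0. -/
def MemOmega (ω : ℝ → ℝ) : Prop :=
  (∀ δ, 0 ≤ ω δ) ∧ (∀ δ, ω (-δ) = ω δ) ∧
  (∀ δ₁ δ₂, ω (δ₁ + δ₂) ≤ ω δ₁ + ω δ₂) ∧
  Tendsto ω (nhds 0) (nhds 0)

/-- Conditions H1–H3 with constant Υ for a Hamiltonian H on [t₀,ϑ₀]×ℝⁿ×ℝⁿ. -/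
def SatisfiesH (t₀ ϑ₀ : ℝ) (n : ℕ) (Υ : ℝ) (H : ℝ → Eu n → Eu n → ℝ) : Prop :=
  (∀ t ∈ Icc t₀ ϑ₀, ∀ x s : Eu n, |H t x s| ≤ Υ * ‖s‖ * (1 + ‖x‖)) ∧
  (∀ A : Set (Eu n), Bornology.IsBounded A →
    ∃ ωA : ℝ → ℝ, ∃ LA : ℝ, MemOmega ωA ∧ 0 < LA ∧
      ∀ R : ℝ, 0 < R → ∀ t' ∈ Icc t₀ ϑ₀, ∀ t'' ∈ Icc t₀ ϑ₀,
        ∀ x' ∈ A, ∀ x'' ∈ A, ∀ s' s'' : Eu n, ‖s'‖ ≤ R → ‖s''‖ ≤ R →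
          |H t' x' s' - H t'' x'' s''| ≤
            ωA (t' - t'') + LA * R * ‖x' - x''‖ +
              Υ * (1 + min ‖x'‖ ‖x''‖) * ‖s' - s''‖) ∧
  (∀ t ∈ Icc t₀ ϑ₀, ∀ x s : Eu n, ∀ α : ℝ, 0 ≤ α → H t x (α • s) = α * H t x s)

set_option maxHeartbeats 1000000 in
/-- For a Hamiltonian H satisfying H1–H3 with constant Υ, the explicit dynamics
f(t,x,(y,y'),(z,z')) = (H(t,x,z)+Υ(1+‖x‖))·z' + Υ(1+‖x‖)·y + Υ(1+‖x‖)(1+⟨y,z⟩)·y'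
on the unit ball B realizes H as the attained maxmin:
H(t,x,s) = max_{(z,z')∈B×B} min_{(y,y')∈B×B} ⟨s, f(t,x,(y,y'),(z,z'))⟩. -/
theorem explicit_maxmin_representation
    (t₀ ϑ₀ : ℝ) (ht : t₀ < ϑ₀) (n : ℕ) (hn : 1 ≤ n) (Υ : ℝ) (hΥ : 0 < Υ)
    (H : ℝ → Eu n → Eu n → ℝ) (hH : SatisfiesH t₀ ϑ₀ n Υ H)
    (f : ℝ → Eu n → Eu n × Eu n → Eu n × Eu n → Eu n)
    (hf : ∀ (t : ℝ) (x y y' z z' : Eu n),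
      f t x (y, y') (z, z') =
        (H t x z + Υ * (1 + ‖x‖)) • z' + (Υ * (1 + ‖x‖)) • y +
          (Υ * (1 + ‖x‖) * (1 + ⟪y, z⟫)) • y') :
    ∀ t ∈ Icc t₀ ϑ₀, ∀ x s : Eu n,
      (∀ v ∈ (closedBall (0 : Eu n) 1) ×ˢ (closedBall (0 : Eu n) 1),
        ∃ r : ℝ, IsLeast ((fun u => ⟪s, f t x u v⟫) ''
          ((closedBall (0 : Eu n) 1) ×ˢ (closedBall (0 : Eu n) 1))) r) ∧
      IsGreatest {r : ℝ | ∃ v ∈ (closedBall (0 : Eu n) 1) ×ˢ (closedBall (0 : Eu n) 1),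
        IsLeast ((fun u => ⟪s, f t x u v⟫) ''
          ((closedBall (0 : Eu n) 1) ×ˢ (closedBall (0 : Eu n) 1))) r} (H t x s) := by
  obtain ⟨h1, h2, h3⟩ := hH
  intro t ht' x s
  have hx0 : (0:ℝ) ≤ ‖x‖ := norm_nonneg x
  set c : ℝ := Υ * (1 + ‖x‖) with hc
  have hc0 : 0 < c := by rw [hc]; positivity
  set B2 : Set (Eu n × Eu n) := (closedBall (0 : Eu n) 1) ×ˢ (closedBall (0 : Eu n) 1) with hB2
  have hB2c : IsCompact B2 := (isCompact_closedBall _ _).prod (isCompact_closedBall _ _)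
  have hB2ne : B2.Nonempty := ⟨(0,0), by simp [hB2]⟩
  have hval : ∀ y y' z z' : Eu n,
      ⟪s, f t x (y, y') (z, z')⟫ =
        (H t x z + c) * ⟪s, z'⟫ + c * ⟪s, y⟫ + (c * (1 + ⟪y, z⟫)) * ⟪s, y'⟫ := by
    intro y y' z z'
    rw [hf, hc]
    simp only [inner_add_right, real_inner_smul_right]
  have hcont : ∀ v : Eu n × Eu n, Continuous fun u : Eu n × Eu n => ⟪s, f t x u v⟫ := by
    intro v
    have heq : (fun u : Eu n × Eu n => ⟪s, f t x u v⟫) =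
        fun u => (H t x v.1 + c) * ⟪s, v.2⟫ + c * ⟪s, u.1⟫ +
          (c * (1 + ⟪u.1, v.1⟫)) * ⟪s, u.2⟫ := by
      funext u
      simpa using hval u.1 u.2 v.1 v.2
    rw [heq]
    have c1 : Continuous fun u : Eu n × Eu n => ⟪s, u.1⟫ :=
      Continuous.inner continuous_const continuous_fst
    have c2 : Continuous fun u : Eu n × Eu n => ⟪s, u.2⟫ :=
      Continuous.inner continuous_const continuous_snd
    have c3 : Continuous fun u : Eu n × Eu n => ⟪u.1, v.1⟫ :=
      Continuous.inner continuous_fst continuous_const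
    exact ((continuous_const.add (continuous_const.mul c1)).add
      ((continuous_const.mul (continuous_const.add c3)).mul c2))
  -- Lipschitz in s
  have hLip : ∀ s₁ s₂ : Eu n, |H t x s₁ - H t x s₂| ≤ c * ‖s₁ - s₂‖ := by
    intro s₁ s₂
    obtain ⟨ω, L, hω, hL, hest⟩ := h2 {x} (Bornology.isBounded_singleton)
    have hω0 : ω 0 = 0 := by
      have h₁ : ∀ ε > (0:ℝ), ω 0 < ε := by
        intro ε hε
        exact (hω.2.2.2.eventually (eventually_lt_nhds hε)).self_of_nhds
      by_contra hne
      have hpos : 0 < ω 0 := lt_of_le_of_ne (hω.1 0) (Ne.symm hne)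
      exact absurd (h₁ (ω 0) hpos) (lt_irrefl _)
    have h' := hest (‖s₁‖ + ‖s₂‖ + 1) (by positivity) t ht' t ht'
      x (Set.mem_singleton x) x (Set.mem_singleton x) s₁ s₂
      (by linarith [norm_nonneg s₂]) (by linarith [norm_nonneg s₁])
    simp only [sub_self, hω0, norm_zero, min_self, mul_zero, zero_add, add_zero] at h'
    rw [hc]
    exact h'
  have hhom : ∀ (α : ℝ), 0 ≤ α → ∀ z : Eu n, H t x (α • z) = α * H t x z :=
    fun α hα z => h3 t ht' x z α hα
  have hH0 : H t x 0 = 0 := by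
    have := hhom 0 le_rfl 0
    simpa using this
  have hHz : ∀ z : Eu n, ‖z‖ ≤ 1 → |H t x z| ≤ c := by
    intro z hz
    have := h1 t ht' x z
    rw [hc]
    nlinarith [norm_nonneg z]
  refine ⟨?_, ?_, ?_⟩
  · -- existence of min
    intro v _
    obtain ⟨u₀, hu₀, hmin⟩ := hB2c.exists_isMinOn hB2ne (hcont v).continuousOn
    exact ⟨_, ⟨u₀, hu₀, rfl⟩, by rintro r ⟨u, hu, rfl⟩; exact (isMinOn_iff.mp hmin) u hu⟩
  · -- membership: H t x s is attained
    by_cases hs : s = 0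
    · subst hs
      rw [hH0]
      refine ⟨(0, 0), by simp [hB2], ⟨(0, 0), by simp [hB2], by simp⟩, ?_⟩
      rintro r ⟨u, hu, rfl⟩
      simp
    · have hns : (0:ℝ) < ‖s‖ := norm_pos_iff.mpr hs
      set e : Eu n := ‖s‖⁻¹ • s with he
      have hne : ‖e‖ = 1 := by
        rw [he, norm_smul, norm_inv, norm_norm, inv_mul_cancel₀ (ne_of_gt hns)]
      have hse : ⟪s, e⟫ = ‖s‖ := by
        rw [he, real_inner_smul_right, real_inner_self_eq_norm_mul_norm]
        field_simp
      have hHe : H t x e = ‖s‖⁻¹ * H t x s := hhom _ (by positivity) s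
      have hmem : (e, e) ∈ B2 := by
        simp [hB2, mem_closedBall_zero_iff, hne]
      refine ⟨(e, e), hmem, ⟨(-e, 0), by simp [hB2, mem_closedBall_zero_iff, hne], ?_⟩, ?_⟩
      · -- value at (-e, 0) equals H t x s
        show ⟪s, f t x (-e, (0 : Eu n)) (e, e)⟫ = H t x s
        rw [hval, hse, inner_neg_right, hse, inner_zero_right, hHe]
        field_simp
        ring
      · rintro r ⟨⟨y, y'⟩, hu, rfl⟩
        obtain ⟨hy, hy'⟩ : ‖y‖ ≤ 1 ∧ ‖y'‖ ≤ 1 := by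
          simpa [hB2, mem_closedBall_zero_iff] using hu
        show H t x s ≤ ⟪s, f t x (y, y') (e, e)⟫
        rw [hval, hse, hHe]
        have hp : |⟪y, e⟫| ≤ 1 := by
          have := abs_real_inner_le_norm y e
          rw [hne] at this; nlinarith
        have hq : |⟪s, y'⟫| ≤ ‖s‖ := by
          have := abs_real_inner_le_norm s y'
          nlinarith [norm_nonneg s]
        have hsy : ⟪s, y⟫ = ‖s‖ * ⟪y, e⟫ := by
          rw [he, real_inner_smul_right, real_inner_comm]
          field_simp
        rw [hsy]
        have hp1 : -1 ≤ ⟪y, e⟫ := neg_le_of_abs_le hp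
        have hq1 : -‖s‖ ≤ ⟪s, y'⟫ := neg_le_of_abs_le hq
        have key : 0 ≤ c * (1 + ⟪y, e⟫) * (⟪s, y'⟫ + ‖s‖) :=
          mul_nonneg (mul_nonneg hc0.le (by linarith)) (by linarith)
        have : ‖s‖⁻¹ * H t x s * ‖s‖ = H t x s := by field_simp
        nlinarith [hc0, hns]
  · -- upper bound
    rintro r ⟨⟨z, z'⟩, hv, hle⟩
    obtain ⟨hz, hz'⟩ : ‖z‖ ≤ 1 ∧ ‖z'‖ ≤ 1 := by
      simpa [hB2, mem_closedBall_zero_iff] using hv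
    have hzc : 0 ≤ H t x z + c := by
      have := hHz z hz
      nlinarith [abs_nonneg (H t x z), neg_abs_le (H t x z)]
    have hsz' : ⟪s, z'⟫ ≤ ‖s‖ := by
      have := real_inner_le_norm s z'
      nlinarith [norm_nonneg s]
    by_cases hs : s = 0
    · have hr : r ≤ ⟪s, f t x (0, 0) (z, z')⟫ :=
        hle.2 ⟨(0,0), by simp [hB2], rfl⟩
      rw [hs, hH0]
      simpa [hs] using hr
    · have hns : (0:ℝ) < ‖s‖ := norm_pos_iff.mpr hs
      obtain ⟨w, hw⟩ : ∃ w : Eu n, w = s - ‖s‖ • z := ⟨_, rfl⟩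
      set y'₀ : Eu n := -(‖s‖⁻¹ • s) with hy'₀
      have hny'₀ : ‖y'₀‖ = 1 := by
        rw [hy'₀, norm_neg, norm_smul, norm_inv, norm_norm, inv_mul_cancel₀ (ne_of_gt hns)]
      have hsy'₀ : ⟪s, y'₀⟫ = -‖s‖ := by
        rw [hy'₀, inner_neg_right, real_inner_smul_right, real_inner_self_eq_norm_mul_norm]
        field_simp
      have hhomz : H t x (‖s‖ • z) = ‖s‖ * H t x z := hhom _ (le_of_lt hns) z
      have hlip' : H t x (‖s‖ • z) - H t x s ≤ c * ‖w‖ := by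
        have h := hLip (‖s‖ • z) s
        rw [norm_sub_rev, ← hw] at h
        exact le_trans (le_abs_self _) h
      by_cases hw0 : w = 0
      · have hr : r ≤ ⟪s, f t x ((0:Eu n), y'₀) (z, z')⟫ :=
          hle.2 ⟨((0:Eu n), y'₀), by simp [hB2, mem_closedBall_zero_iff, hny'₀], rfl⟩
        rw [hval, hsy'₀] at hr
        simp only [inner_zero_right, inner_zero_left, mul_zero, add_zero] at hr
        have hwz : ‖w‖ = 0 := by rw [hw0, norm_zero]
        rw [hwz, mul_zero] at hlip'
        nlinarith [hns]
      · have hnw : (0:ℝ) < ‖w‖ := norm_pos_iff.mpr hw0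
        set y₀ : Eu n := -(‖w‖⁻¹ • w) with hy₀
        have hny₀ : ‖y₀‖ = 1 := by
          rw [hy₀, norm_neg, norm_smul, norm_inv, norm_norm, inv_mul_cancel₀ (ne_of_gt hnw)]
        have hr : r ≤ ⟪s, f t x (y₀, y'₀) (z, z')⟫ :=
          hle.2 ⟨(y₀, y'₀), by simp [hB2, mem_closedBall_zero_iff, hny₀, hny'₀], rfl⟩
        rw [hval, hsy'₀] at hr
        have hsw : ⟪s, y₀⟫ = -(‖w‖⁻¹ * ⟪s, w⟫) := by
          rw [hy₀, inner_neg_right, real_inner_smul_right]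
        have hwzq : ⟪y₀, z⟫ = -(‖w‖⁻¹ * ⟪w, z⟫) := by
          rw [hy₀, inner_neg_left, real_inner_smul_left]
        rw [hsw, hwzq] at hr
        have hkey : ⟪s, w⟫ - ‖s‖ * ⟪w, z⟫ = ‖w‖ * ‖w‖ := by
          have h₁ : ⟪w, w⟫ = ‖w‖ * ‖w‖ := real_inner_self_eq_norm_mul_norm w
          have h₂ : ⟪w, s - ‖s‖ • z⟫ = ⟪w, s⟫ - ‖s‖ * ⟪w, z⟫ := by
            rw [inner_sub_right, real_inner_smul_right]
          rw [← hw] at h₂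
          rw [real_inner_comm w s, ← h₂, h₁]
          
        -- r ≤ (H z + c) ⟪s,z'⟫ + c * (-(‖w‖⁻¹ ⟪s,w⟫)) + c (1 - ‖w‖⁻¹⟪w,z⟫) (-‖s‖)
        have hval' : (H t x z + c) * ⟪s, z'⟫ + c * (-(‖w‖⁻¹ * ⟪s, w⟫)) +
            c * (1 + -(‖w‖⁻¹ * ⟪w, z⟫)) * (-‖s‖) =
            (H t x z + c) * ⟪s, z'⟫ - c * ‖s‖ - c * ‖w‖ := by
          have hinv : ‖w‖⁻¹ * (‖w‖ * ‖w‖) = ‖w‖ := by field_simp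
          have : ‖w‖⁻¹ * ⟪s, w⟫ - ‖s‖ * (‖w‖⁻¹ * ⟪w, z⟫) = ‖w‖ := by
            rw [show ‖w‖⁻¹ * ⟪s, w⟫ - ‖s‖ * (‖w‖⁻¹ * ⟪w, z⟫)
                = ‖w‖⁻¹ * (⟪s, w⟫ - ‖s‖ * ⟪w, z⟫) by ring, hkey, hinv]
          nlinarith [this]
        rw [hval'] at hr
        nlinarith [hr, hlip', hhomz, hzc, hsz', mul_le_mul_of_nonneg_left hsz' hzc]
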